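/- Define rationals c_n by c_0 = 1 and the recursion c_n = ∑_{i=0}^{n-1} (-1)^{n-1+i} c_i · ∏_{j=1}^{n-i} 1/(1-q^j)^2 (in the field ℚ(q) or ℚ[[q]]). Then c_n = W_n(q) / ∏_{k=1}^{n} (1-q^k)^2, where W_n(q) = ∑ q^{inv(σ)+inv(τ)} over pairs of permutations of {1,...,n} with no common ascent. -/

import Mathlib

open Finset

/-- A common ascent of a pair of permutations of `{1,...,n}`:
an index `i` with `i+1 = j ≤ n` such that both permutations increase from `i` to `j`. -/
def CommonAscent {n : ℕ} (σ τ : Equiv.Perm (Fin n)) : Prop :=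
  ∃ i j : Fin n, (i : ℕ) + 1 = (j : ℕ) ∧ σ i < σ j ∧ τ i < τ j

instance {n : ℕ} : DecidablePred
    (fun p : Equiv.Perm (Fin n) × Equiv.Perm (Fin n) => CommonAscent p.1 p.2) := fun _ => by
  unfold CommonAscent; infer_instance

/-- The number of inversions of a permutation. -/
def inversions {n : ℕ} (σ : Equiv.Perm (Fin n)) : ℕ :=
  (Finset.univ.filter (fun p : Fin n × Fin n => p.1 < p.2 ∧ σ p.2 < σ p.1)).card

/-- `W n = ∑ q^(inv σ + inv τ)` over pairs of permutations with no common ascent,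
as a polynomial in `q`. -/
noncomputable def W (n : ℕ) : Polynomial ℚ :=
  ∑ p ∈ Finset.univ.filter
      (fun p : Equiv.Perm (Fin n) × Equiv.Perm (Fin n) => ¬ CommonAscent p.1 p.2),
    Polynomial.X ^ (inversions p.1 + inversions p.2)


namespace Spec17
open Polynomial Equiv



/-- common ascent at position `p` (0-based). -/
def CAat {n : ℕ} (σ τ : Perm (Fin n)) (p : ℕ) : Prop :=
  ∃ a b : Fin n, (a : ℕ) = p ∧ (b : ℕ) = p + 1 ∧ σ a < σ b ∧ τ a < τ b

lemma commonAscent_iff_CAat {n : ℕ} (σ τ : Perm (Fin n)) :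
    CommonAscent σ τ ↔ ∃ p, CAat σ τ p := by
  constructor
  · rintro ⟨a, b, hab, h1, h2⟩
    exact ⟨(a : ℕ), a, b, rfl, hab.symm, h1, h2⟩
  · rintro ⟨p, a, b, ha, hb, h1, h2⟩
    exact ⟨a, b, by omega, h1, h2⟩

/-- pairs counted in `E n i`: all positions `≥ i` are common ascents,
no common ascent at positions `≤ i-2`. -/
def Valid (n i : ℕ) (σ τ : Perm (Fin n)) : Prop :=
  (∀ p, i ≤ p → p + 1 < n → CAat σ τ p) ∧ (∀ p, p + 2 ≤ i → ¬ CAat σ τ p)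

noncomputable def E (n i : ℕ) : Polynomial ℚ :=
  ∑ p ∈ @Finset.filter _ (fun p : Perm (Fin n) × Perm (Fin n) => Valid n i p.1 p.2)
      (Classical.decPred _) Finset.univ,
    Polynomial.X ^ (inversions p.1 + inversions p.2)

open Classical in
lemma sum_valid_indicator {n : ℕ} (hn : 1 ≤ n) (σ τ : Perm (Fin n)) :
    ∑ i ∈ Finset.range (n+1), (-1 : Polynomial ℚ)^i * (if Valid n i σ τ then 1 else 0) = 0 := by
  by_cases hex : ∃ i, i ≤ n ∧ Valid n i σ τ
  · set s := Nat.find hex with hsdef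
    obtain ⟨hsn, hsv⟩ := Nat.find_spec hex
    have hmin : ∀ m, m < s → ¬ (m ≤ n ∧ Valid n m σ τ) := fun m hm => Nat.find_min hex hm
    -- s < n
    have hslt : s < n := by
      rcases Nat.lt_or_ge s n with h | h
      · exact h
      · exfalso
        have hsn' : s = n := le_antisymm hsn h
        have hv : Valid n (n-1) σ τ := by
          constructor
          · intro p hp hp1; omega
          · intro p hp; exact hsv.2 p (by omega)
        exact hmin (n-1) (by omega) ⟨by omega, hv⟩
    -- Valid at s+1
    have hsv1 : Valid n (s+1) σ τ := by
      constructor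
      · intro p hp hp1; exact hsv.1 p (by omega) hp1
      · intro p hp
        rcases Nat.lt_or_ge (p+2) (s+1) with h | h
        · exact hsv.2 p (by omega)
        · -- p = s - 1, s ≥ 1
          have hps : p + 1 = s := by omega
          intro hca
          have hv : Valid n p σ τ := by
            constructor
            · intro q hq hq1
              rcases Nat.eq_or_lt_of_le hq with h' | h'
              · rwa [← h']
              · exact hsv.1 q (by omega) hq1
            · intro q hq; exact hsv.2 q (by omega)
          exact hmin p (by omega) ⟨by omega, hv⟩
    -- only s, s+1 are valid
    have honly : ∀ i, i ≤ n → Valid n i σ τ → i = s ∨ i = s + 1 := by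
      intro i hi hv
      have his : s ≤ i := by
        by_contra h
        exact hmin i (by omega) ⟨hi, hv⟩
      rcases Nat.lt_or_ge i (s+2) with h | h
      · omega
      · exfalso
        have hca : CAat σ τ s := hsv.1 s le_rfl (by omega)
        exact hv.2 s (by omega) hca
    have hterm : ∀ i ∈ Finset.range (n+1),
        (-1 : Polynomial ℚ)^i * (if Valid n i σ τ then 1 else 0)
          = (if i = s then (-1 : Polynomial ℚ)^s else 0)
            + (if i = s+1 then (-1 : Polynomial ℚ)^(s+1) else 0) := by
      intro i hi
      simp only [Finset.mem_range] at hi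
      by_cases h1 : i = s
      · subst h1
        rw [if_pos hsv, mul_one, if_pos rfl, if_neg (by omega), add_zero]
      · by_cases h2 : i = s + 1
        · subst h2; simp [hsv1, h1]
        · have : ¬ Valid n i σ τ := fun hv => by
            rcases honly i (by omega) hv with h | h <;> omega
          simp [this, h1, h2]
    rw [Finset.sum_congr rfl hterm, Finset.sum_add_distrib,
      Finset.sum_ite_eq' _ s, Finset.sum_ite_eq' _ (s+1),
      if_pos (Finset.mem_range.mpr (by omega)), if_pos (Finset.mem_range.mpr (by omega))]
    ring
  · push_neg at hex
    refine Finset.sum_eq_zero fun i hi => ?_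
    simp only [Finset.mem_range] at hi
    rw [if_neg (hex i (by omega)), mul_zero]

open Classical in
lemma cancellation {n : ℕ} (hn : 1 ≤ n) :
    ∑ i ∈ Finset.range (n+1), (-1 : Polynomial ℚ)^i * E n i = 0 := by
  have : ∀ i, E n i = ∑ p : Perm (Fin n) × Perm (Fin n),
      (if Valid n i p.1 p.2 then Polynomial.X ^ (inversions p.1 + inversions p.2) else 0) := by
    intro i
    rw [E, Finset.sum_filter]
  simp only [this, Finset.mul_sum]
  rw [Finset.sum_comm]
  refine Finset.sum_eq_zero fun p _ => ?_
  have := sum_valid_indicator hn p.1 p.2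
  calc ∑ i ∈ Finset.range (n+1), (-1 : Polynomial ℚ)^i *
        (if Valid n i p.1 p.2 then Polynomial.X ^ (inversions p.1 + inversions p.2) else 0)
      = Polynomial.X ^ (inversions p.1 + inversions p.2) *
        ∑ i ∈ Finset.range (n+1), (-1 : Polynomial ℚ)^i * (if Valid n i p.1 p.2 then 1 else 0) := by
        rw [Finset.mul_sum]
        refine Finset.sum_congr rfl fun i _ => ?_
        by_cases h : Valid n i p.1 p.2 <;> simp [h] <;> ring
    _ = 0 := by rw [this, mul_zero]





def crossN (S U : Finset ℕ) : ℕ := ((S ×ˢ U).filter fun ab => ab.2 < ab.1).card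

def wN (n : ℕ) (T : Finset ℕ) : ℕ := crossN T (Finset.range n \ T)

noncomputable def GN (n i : ℕ) : Polynomial ℚ :=
  ∑ T ∈ Finset.powersetCard i (Finset.range n), Polynomial.X ^ wN n T

lemma crossN_empty_left (U : Finset ℕ) : crossN ∅ U = 0 := by simp [crossN]

lemma crossN_empty_right (S : Finset ℕ) : crossN S ∅ = 0 := by simp [crossN]

lemma crossN_insert_right {n : ℕ} {T U : Finset ℕ} (hT : ∀ a ∈ T, a < n) :
    crossN T (insert n U) = crossN T U := by
  unfold crossN
  rw [Finset.insert_eq, Finset.product_union, Finset.filter_union, Finset.product_singleton,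
    Finset.filter_map]
  simp only [Function.Embedding.coeFn_mk]
  have h0 : T.filter ((fun ab : ℕ × ℕ => ab.2 < ab.1) ∘ (fun i => (i, n))) = ∅ := by
    rw [Finset.filter_eq_empty_iff]
    intro a ha
    simpa using not_lt.mpr (le_of_lt (hT a ha))
  rw [h0, Finset.map_empty, Finset.empty_union]

lemma crossN_insert_left {n : ℕ} {T U : Finset ℕ} (hT : n ∉ T) (hU : ∀ b ∈ U, b < n) :
    crossN (insert n T) U = U.card + crossN T U := by
  unfold crossN
  rw [Finset.insert_eq, Finset.union_product, Finset.filter_union, Finset.singleton_product,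
    Finset.filter_map]
  simp only [Function.Embedding.coeFn_mk]
  have h0 : U.filter ((fun ab : ℕ × ℕ => ab.2 < ab.1) ∘ (Prod.mk n)) = U := by
    rw [Finset.filter_eq_self]
    intro b hb
    simpa using hU b hb
  rw [h0, Finset.card_union_of_disjoint, Finset.card_map]
  refine Finset.disjoint_left.mpr fun ab hab hab' => ?_
  simp only [Finset.mem_map, Finset.mem_filter, Finset.mem_product,
    Function.Embedding.coeFn_mk] at hab hab'
  obtain ⟨b, _, rfl⟩ := hab
  exact hT hab'.1.1

lemma GN_zero (n : ℕ) : GN n 0 = 1 := by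
  simp [GN, wN, crossN_empty_left]

lemma GN_self (n : ℕ) : GN n n = 1 := by
  have h := Finset.powersetCard_self (Finset.range n)
  rw [Finset.card_range] at h
  rw [GN, h, Finset.sum_singleton, wN, Finset.sdiff_self, crossN_empty_right, pow_zero]

lemma GN_of_lt {n i : ℕ} (h : n < i) : GN n i = 0 := by
  rw [GN, Finset.powersetCard_eq_empty.mpr (by simpa using h), Finset.sum_empty]

lemma GN_succ (n i : ℕ) : GN (n+1) (i+1) = GN n (i+1) + Polynomial.X ^ (n - i) * GN n i := by
  have hnr : n ∉ Finset.range n := by simp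
  rw [GN, Finset.range_add_one, Finset.powersetCard_succ_insert hnr, Finset.sum_union]
  · congr 1
    · refine Finset.sum_congr rfl fun T hT => ?_
      have hTsub := Finset.mem_powersetCard.mp hT
      have hnT : n ∉ T := fun h => hnr (hTsub.1 h)
      congr 1
      rw [wN, wN]
      have h1 : Finset.range (n+1) \ T = insert n (Finset.range n \ T) := by
        rw [Finset.range_add_one, Finset.insert_sdiff_of_notMem _ hnT]
      rw [h1]
      exact crossN_insert_right (fun a ha => Finset.mem_range.mp (hTsub.1 ha))
    · have hinj : ∀ T ∈ Finset.powersetCard i (Finset.range n),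
          ∀ U ∈ Finset.powersetCard i (Finset.range n), insert n T = insert n U → T = U := by
        intro T hT U hU h
        have hnT : n ∉ T := fun hh => hnr ((Finset.mem_powersetCard.mp hT).1 hh)
        have hnU : n ∉ U := fun hh => hnr ((Finset.mem_powersetCard.mp hU).1 hh)
        ext a
        by_cases ha : a = n
        · simp [ha, hnT, hnU]
        · have := Finset.ext_iff.mp h a
          simpa [Finset.mem_insert, ha] using this
      rw [Finset.sum_image hinj, GN, Finset.mul_sum]
      refine Finset.sum_congr rfl fun T hT => ?_
      have hTsub := Finset.mem_powersetCard.mp hT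
      have hnT : n ∉ T := fun h => hnr (hTsub.1 h)
      rw [← pow_add]
      congr 1
      have hcompl : Finset.range (n+1) \ insert n T = Finset.range n \ T := by
        ext x
        simp only [Finset.mem_sdiff, Finset.mem_insert, Finset.mem_range,
          Finset.range_add_one, not_or]
        constructor
        · rintro ⟨h1 | h1, h2, h3⟩
          · exact absurd h1 h2
          · exact ⟨h1, h3⟩
        · rintro ⟨h1, h2⟩
          exact ⟨Or.inr h1, by omega, h2⟩
      rw [wN, wN, hcompl, crossN_insert_left hnT
        (fun b hb => Finset.mem_range.mp (Finset.mem_sdiff.mp hb).1)]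
      have hcard : (Finset.range n \ T).card = n - i := by
        rw [Finset.card_sdiff_of_subset hTsub.1, Finset.card_range, hTsub.2]
      omega
  · refine Finset.disjoint_left.mpr fun T hT hT' => ?_
    have hnT : n ∉ T := fun h => hnr ((Finset.mem_powersetCard.mp hT).1 h)
    obtain ⟨U, hU, rfl⟩ := Finset.mem_image.mp hT'
    exact hnT (Finset.mem_insert_self n U)

/-- Product formula for the Gaussian binomial. -/
lemma GN_prod : ∀ n i : ℕ, i ≤ n →
    GN n i * ∏ j ∈ Finset.range (n - i), (1 - Polynomial.X ^ (j+1)) =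
      ∏ j ∈ Finset.range (n - i), (1 - Polynomial.X ^ (i+1+j)) := by
  intro n
  induction n with
  | zero => intro i hi; interval_cases i; simp [GN_zero]
  | succ n ih =>
    intro i hi
    rcases Nat.eq_zero_or_pos i with rfl | hipos
    · rw [GN_zero, one_mul]
      exact Finset.prod_congr rfl fun j _ => by rw [Nat.zero_add, Nat.add_comm]
    obtain ⟨i', rfl⟩ : ∃ i', i = i' + 1 := ⟨i - 1, by omega⟩
    rcases Nat.lt_or_ge i' n with hlt | hge
    · have h1 : n + 1 - (i' + 1) = n - i' := by omega
      rw [GN_succ, h1]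
      set m := n - i' - 1 with hm
      have hnm : n - i' = m + 1 := by omega
      have hnm2 : n - (i' + 1) = m := by omega
      have ih1 := ih (i' + 1) (by omega)
      rw [hnm2] at ih1
      have ih2 := ih i' (by omega)
      rw [hnm] at ih2
      rw [hnm, Finset.prod_range_succ, Finset.prod_range_succ]
      rw [Finset.prod_range_succ, Finset.prod_range_succ'] at ih2
      have hQ : ∏ j ∈ Finset.range m, ((1 : Polynomial ℚ) - Polynomial.X ^ (i' + 1 + (j + 1)))
          = ∏ j ∈ Finset.range m, ((1 : Polynomial ℚ) - Polynomial.X ^ (i' + 1 + 1 + j)) :=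
        Finset.prod_congr rfl fun j _ => by rw [show i' + 1 + (j+1) = i' + 1 + 1 + j by omega]
      rw [hQ] at ih2
      have hexp : i' + 1 + 1 + m = (m + 1) + (i' + 1) := by omega
      rw [hexp]
      linear_combination (1 - Polynomial.X ^ (m+1)) * ih1 + Polynomial.X ^ (m+1) * ih2
    · have h2 : i' + 1 = n + 1 := by omega
      rw [h2, GN_self, Nat.sub_self]
      simp





/-- `σ` is increasing at all positions `≥ i`. -/
def SufInc (i : ℕ) (σ : Perm (Fin n)) : Prop :=
  ∀ p q : Fin n, i ≤ (p : ℕ) → (p : ℕ) + 1 = (q : ℕ) → σ p < σ q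

lemma sufInc_mono {σ : Perm (Fin n)} (h : SufInc i σ) :
    ∀ p q : Fin n, i ≤ (p : ℕ) → p < q → σ p < σ q := by
  have key : ∀ d : ℕ, ∀ p q : Fin n, i ≤ (p : ℕ) → (q : ℕ) = (p : ℕ) + d + 1 → σ p < σ q := by
    intro d
    induction d with
    | zero => intro p q hip hq; exact h p q hip (by omega)
    | succ d ihd =>
      intro p q hip hq
      have hq' : (p : ℕ) + d + 1 < n := by have := q.isLt; omega
      have h1 : σ p < σ ⟨(p : ℕ) + d + 1, hq'⟩ := ihd p _ hip rfl
      have h2 : σ ⟨(p : ℕ) + d + 1, hq'⟩ < σ q := h _ q (by simp; omega) (by simp; omega)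
      exact h1.trans h2
  intro p q hip hpq
  exact key ((q : ℕ) - (p : ℕ) - 1) p q hip (by have := hpq; omega)

/-- set of values taken on the first `i` positions. -/
def pset (i : ℕ) (σ : Perm (Fin n)) : Finset (Fin n) :=
  (Finset.univ.filter fun p : Fin n => (p : ℕ) < i).image σ

lemma mem_pset {σ : Perm (Fin n)} {a : Fin n} : a ∈ pset i σ ↔ ((σ.symm a : Fin n) : ℕ) < i := by
  simp only [pset, Finset.mem_image, Finset.mem_filter, Finset.mem_univ, true_and]
  constructor
  · rintro ⟨p, hp, rfl⟩; simpa using hp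
  · intro h; exact ⟨σ.symm a, h, by simp⟩

lemma prefix_filter_eq (hi : i ≤ n) :
    (Finset.univ.filter fun p : Fin n => (p : ℕ) < i) =
      (Finset.univ : Finset (Fin i)).map (Fin.castLEEmb hi) := by
  ext p
  simp only [Finset.mem_filter, Finset.mem_univ, true_and, Finset.mem_map, Fin.castLEEmb,
    Function.Embedding.coeFn_mk]
  constructor
  · intro h; exact ⟨⟨(p : ℕ), h⟩, by simp [Fin.ext_iff]⟩
  · rintro ⟨q, _, rfl⟩; simpa using q.isLt

lemma card_pset (hi : i ≤ n) (σ : Perm (Fin n)) : (pset i σ).card = i := by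
  rw [pset, Finset.card_image_of_injective _ σ.injective, prefix_filter_eq hi,
    Finset.card_map, Finset.card_univ, Fintype.card_fin]

lemma card_pset_compl (hi : i ≤ n) (σ : Perm (Fin n)) : (pset i σ)ᶜ.card = n - i := by
  rw [Finset.card_compl, card_pset hi, Fintype.card_fin]

lemma mem_pset_self {σ : Perm (Fin n)} {p : Fin n} (hp : (p : ℕ) < i) : σ p ∈ pset i σ := by
  rw [mem_pset]; simpa using hp

/-- relative order of `σ` on the first `i` positions. -/
noncomputable def rk (hi : i ≤ n) (σ : Perm (Fin n)) : Perm (Fin i) :=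
  Equiv.ofBijective
    (fun p => ((pset i σ).orderIsoOfFin (card_pset hi σ)).symm
      ⟨σ (Fin.castLE hi p), mem_pset_self (by simpa using p.isLt)⟩)
    (Finite.injective_iff_bijective.mp (fun p q h => by
      have := congrArg (((pset i σ).orderIsoOfFin (card_pset hi σ))) h
      simp only [OrderIso.apply_symm_apply, Subtype.mk.injEq] at this
      exact Fin.castLE_injective hi (σ.injective this)))

lemma rk_spec (hi : i ≤ n) (σ : Perm (Fin n)) (p : Fin i) :
    (((pset i σ).orderIsoOfFin (card_pset hi σ)) (rk hi σ p) : Fin n) = σ (Fin.castLE hi p) := by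
  simp [rk, Equiv.ofBijective]

/-- `rk` preserves relative order. -/
lemma rk_lt_rk (hi : i ≤ n) (σ : Perm (Fin n)) (p q : Fin i) :
    rk hi σ p < rk hi σ q ↔ σ (Fin.castLE hi p) < σ (Fin.castLE hi q) := by
  rw [← rk_spec hi σ p, ← rk_spec hi σ q]
  rw [show ∀ a b : (pset i σ), (a : Fin n) < (b : Fin n) ↔ a < b from fun a b => Iff.rfl]
  rw [OrderIso.lt_iff_lt]



variable {n i : ℕ}


def wF (T : Finset (Fin n)) : ℕ := ((T ×ˢ Tᶜ).filter fun ab => ab.2 < ab.1).card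

lemma inversions_eq (hi : i ≤ n) (σ : Perm (Fin n)) (hs : SufInc i σ) :
    inversions σ = wF (pset i σ) + inversions (rk hi σ) := by
  classical
  rw [inversions, ← Finset.card_filter_add_card_filter_not
    (p := fun pq : Fin n × Fin n => (pq.2 : ℕ) < i)]
  have h1 : ((Finset.univ.filter (fun pq : Fin n × Fin n => pq.1 < pq.2 ∧ σ pq.2 < σ pq.1)).filter
      (fun pq => (pq.2 : ℕ) < i)).card = inversions (rk hi σ) := by
    rw [inversions]
    refine Finset.card_bij (fun a ha => (⟨(a.1 : ℕ), ?_⟩, ⟨(a.2 : ℕ), ?_⟩)) ?_ ?_ ?_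
    · simp only [Finset.mem_filter, Finset.mem_univ, true_and] at ha
      have := ha.1.1; have := ha.2
      have := Fin.lt_def.mp ha.1.1
      omega
    · simp only [Finset.mem_filter, Finset.mem_univ, true_and] at ha
      exact ha.2
    · intro a ha
      simp only [Finset.mem_filter, Finset.mem_univ, true_and] at ha ⊢
      refine ⟨ha.1.1, ?_⟩
      rw [rk_lt_rk]
      exact ha.1.2
    · intro a ha b hb h
      simp only [Prod.mk.injEq, Fin.mk.injEq] at h
      exact Prod.ext (Fin.ext h.1) (Fin.ext h.2)
    · intro b hb
      simp only [Finset.mem_filter, Finset.mem_univ, true_and] at hb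
      refine ⟨(Fin.castLE hi b.1, Fin.castLE hi b.2), ?_, ?_⟩
      · simp only [Finset.mem_filter, Finset.mem_univ, true_and]
        refine ⟨⟨?_, ?_⟩, ?_⟩
        · exact hb.1
        · rw [← rk_lt_rk hi]; exact hb.2
        · simpa using b.2.isLt
      · simp [Prod.ext_iff, Fin.ext_iff]
  have h2 : ((Finset.univ.filter (fun pq : Fin n × Fin n => pq.1 < pq.2 ∧ σ pq.2 < σ pq.1)).filter
      (fun pq => ¬ ((pq.2 : ℕ) < i))).card = wF (pset i σ) := by
    rw [wF]
    refine Finset.card_bij (fun a _ => (σ a.1, σ a.2)) ?_ ?_ ?_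
    · intro a ha
      simp only [Finset.mem_filter, Finset.mem_univ, true_and] at ha
      obtain ⟨⟨hlt, hinv⟩, hi2⟩ := ha
      have ha1 : (a.1 : ℕ) < i := by
        by_contra hc
        exact absurd (sufInc_mono hs a.1 a.2 (by omega) hlt) (not_lt.mpr (le_of_lt hinv))
      simp only [Finset.mem_filter, Finset.mem_product, Finset.mem_compl]
      refine ⟨⟨mem_pset_self ha1, fun hmem => ?_⟩, hinv⟩
      rw [mem_pset] at hmem
      simp at hmem
      omega
    · intro a ha b hb h
      simp only [Prod.mk.injEq] at h
      exact Prod.ext (σ.injective h.1) (σ.injective h.2)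
    · intro b hb
      simp only [Finset.mem_filter, Finset.mem_product, Finset.mem_compl, mem_pset] at hb
      obtain ⟨⟨hb1, hb2⟩, hblt⟩ := hb
      refine ⟨(σ.symm b.1, σ.symm b.2), ?_, by simp⟩
      simp only [Finset.mem_filter, Finset.mem_univ, true_and, Equiv.apply_symm_apply]
      exact ⟨⟨by rw [Fin.lt_def]; omega, hblt⟩, by omega⟩
  rw [h1, h2]
  omega



lemma card_compl_of_card {T : Finset (Fin n)} (h : T.card = i) :
    Tᶜ.card = n - i := by rw [Finset.card_compl, h, Fintype.card_fin]

noncomputable def glue (hi : i ≤ n) (T : Finset (Fin n)) (σ' : Perm (Fin i)) : Perm (Fin n) :=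
  if h : T.card = i then
    Equiv.ofBijective (fun p : Fin n =>
      if hp : (p : ℕ) < i then (T.orderIsoOfFin h (σ' ⟨p, hp⟩) : Fin n)
      else (Tᶜ.orderIsoOfFin (card_compl_of_card h)
              ⟨(p : ℕ) - i, by have := p.isLt; omega⟩ : Fin n))
    (Finite.injective_iff_bijective.mp (by
      intro p q hpq
      by_cases hp : (p : ℕ) < i <;> by_cases hq : (q : ℕ) < i <;>
        simp only [hp, hq, dif_pos, dif_neg, not_false_iff] at hpq
      · have h1 := (T.orderIsoOfFin h).injective (Subtype.ext hpq)
        have h2 := σ'.injective h1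
        exact Fin.ext (by simpa [Fin.ext_iff] using h2)
      · exact absurd (hpq ▸ (T.orderIsoOfFin h (σ' ⟨p, hp⟩)).2)
          (Finset.mem_compl.mp (Tᶜ.orderIsoOfFin (card_compl_of_card h) _).2)
      · exact absurd (hpq ▸ (Tᶜ.orderIsoOfFin (card_compl_of_card h) _).2)
          (fun hc => Finset.mem_compl.mp hc (T.orderIsoOfFin h (σ' ⟨q, hq⟩)).2)
      · have : ((p : ℕ) - i) = ((q : ℕ) - i) := by
          have := (Tᶜ.orderIsoOfFin (card_compl_of_card h)).injective (Subtype.ext hpq)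
          simpa [Fin.ext_iff] using this
        exact Fin.ext (by omega)))
  else 1

lemma glue_apply_lt (hi : i ≤ n) {T : Finset (Fin n)} (h : T.card = i) (σ' : Perm (Fin i))
    {p : Fin n} (hp : (p : ℕ) < i) :
    glue hi T σ' p = (T.orderIsoOfFin h (σ' ⟨p, hp⟩) : Fin n) := by
  simp [glue, h, hp, Equiv.ofBijective]

lemma glue_apply_ge (hi : i ≤ n) {T : Finset (Fin n)} (h : T.card = i) (σ' : Perm (Fin i))
    {p : Fin n} (hp : ¬ ((p : ℕ) < i)) :
    glue hi T σ' p = (Tᶜ.orderIsoOfFin (card_compl_of_card h)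
      ⟨(p : ℕ) - i, by have := p.isLt; omega⟩ : Fin n) := by
  simp [glue, h, hp, Equiv.ofBijective]

lemma glue_sufInc (hi : i ≤ n) {T : Finset (Fin n)} (h : T.card = i) (σ' : Perm (Fin i)) :
    SufInc i (glue hi T σ') := by
  intro p q hip hpq
  rw [glue_apply_ge hi h σ' (by omega), glue_apply_ge hi h σ' (by omega)]
  have hlt : (⟨(p : ℕ) - i, by have := p.isLt; omega⟩ : Fin (n - i))
      < ⟨(q : ℕ) - i, by have := q.isLt; omega⟩ := by
    rw [Fin.mk_lt_mk]; omega
  exact (Tᶜ.orderIsoOfFin (card_compl_of_card h)).strictMono hlt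

lemma glue_lt_prefix (hi : i ≤ n) {T : Finset (Fin n)} (h : T.card = i) (σ' : Perm (Fin i))
    (p q : Fin i) :
    glue hi T σ' (Fin.castLE hi p) < glue hi T σ' (Fin.castLE hi q) ↔ σ' p < σ' q := by
  rw [glue_apply_lt hi h σ' (by simpa using p.isLt), glue_apply_lt hi h σ' (by simpa using q.isLt)]
  have e1 : (⟨((Fin.castLE hi p) : ℕ), by simpa using p.isLt⟩ : Fin i) = p := Fin.ext rfl
  have e2 : (⟨((Fin.castLE hi q) : ℕ), by simpa using q.isLt⟩ : Fin i) = q := Fin.ext rfl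
  rw [e1, e2]
  rw [show ((T.orderIsoOfFin h (σ' p) : Fin n) < (T.orderIsoOfFin h (σ' q) : Fin n))
      ↔ T.orderIsoOfFin h (σ' p) < T.orderIsoOfFin h (σ' q) from Subtype.coe_lt_coe,
    OrderIso.lt_iff_lt]

lemma pset_glue (hi : i ≤ n) {T : Finset (Fin n)} (h : T.card = i) (σ' : Perm (Fin i)) :
    pset i (glue hi T σ') = T := by
  apply Finset.eq_of_subset_of_card_le
  · intro a ha
    rw [pset, Finset.mem_image] at ha
    obtain ⟨p, hp, rfl⟩ := ha
    rw [Finset.mem_filter] at hp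
    rw [glue_apply_lt hi h σ' hp.2]
    exact (T.orderIsoOfFin h _).2
  · rw [card_pset hi, h]

lemma orderIsoOfFin_val_inj {T : Finset (Fin n)} (h : T.card = i) {p q : Fin i}
    (hpq : (T.orderIsoOfFin h p : Fin n) = (T.orderIsoOfFin h q : Fin n)) : p = q :=
  (T.orderIsoOfFin h).injective (Subtype.ext hpq)

lemma orderIsoOfFin_congr {S T : Finset (Fin n)} (hST : S = T) (hS : S.card = i)
    (hT : T.card = i) (q : Fin i) :
    (S.orderIsoOfFin hS q : Fin n) = (T.orderIsoOfFin hT q : Fin n) := by subst hST; rfl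

lemma rk_glue (hi : i ≤ n) {T : Finset (Fin n)} (h : T.card = i) (σ' : Perm (Fin i)) :
    rk hi (glue hi T σ') = σ' := by
  apply Equiv.ext
  intro p
  apply orderIsoOfFin_val_inj (T := pset i (glue hi T σ')) (card_pset hi _)
  rw [rk_spec hi (glue hi T σ') p]
  rw [glue_apply_lt hi h σ' (by simpa using p.isLt)]
  have e1 : (⟨((Fin.castLE hi p) : ℕ), by simpa using p.isLt⟩ : Fin i) = p := Fin.ext rfl
  rw [e1]
  exact orderIsoOfFin_congr (pset_glue hi h σ').symm h (card_pset hi _) (σ' p)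

lemma glue_unglue (hi : i ≤ n) {σ : Perm (Fin n)} (hs : SufInc i σ) :
    glue hi (pset i σ) (rk hi σ) = σ := by
  apply Equiv.ext
  intro p
  by_cases hp : (p : ℕ) < i
  · rw [glue_apply_lt hi (card_pset hi σ) _ hp]
    have := rk_spec hi σ ⟨(p : ℕ), hp⟩
    rw [this]
    exact congrArg σ (Fin.ext rfl)
  · rw [glue_apply_ge hi (card_pset hi σ) _ hp]
    -- σ on the suffix is the increasing enumeration of (pset i σ)ᶜ
    have hfs : ∀ k : Fin (n - i), σ ⟨i + (k : ℕ), by have := k.isLt; omega⟩ ∈ (pset i σ)ᶜ := by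
      intro k
      rw [Finset.mem_compl, mem_pset]
      simp only [Equiv.symm_apply_apply]
      simp
    have hmono : StrictMono (fun k : Fin (n - i) =>
        σ ⟨i + (k : ℕ), by have := k.isLt; omega⟩) := by
      intro k l hkl
      exact sufInc_mono hs _ _ (by simp) (by rw [Fin.mk_lt_mk]; omega)
    have huniq := Finset.orderEmbOfFin_unique (f := fun k : Fin (n - i) =>
        σ ⟨i + (k : ℕ), by have := k.isLt; omega⟩)
      (card_compl_of_card (card_pset hi σ)) hfs hmono
    have e2 : ((pset i σ)ᶜ.orderIsoOfFin (card_compl_of_card (card_pset hi σ))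
        ⟨(p : ℕ) - i, by have := p.isLt; omega⟩ : Fin n)
        = (pset i σ)ᶜ.orderEmbOfFin (card_compl_of_card (card_pset hi σ))
          ⟨(p : ℕ) - i, by have := p.isLt; omega⟩ := rfl
    rw [e2, ← huniq]
    exact congrArg σ (Fin.ext (by simp; omega))



noncomputable def GF (n i : ℕ) : Polynomial ℚ :=
  ∑ T ∈ Finset.powersetCard i (Finset.univ : Finset (Fin n)), Polynomial.X ^ wF T

/-- transfer of low common ascents along order-preserving relabelings. -/
lemma CAat_transfer (hi : i ≤ n) {σ τ : Perm (Fin n)} {σ' τ' : Perm (Fin i)}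
    (Hσ : ∀ p q : Fin i, σ (Fin.castLE hi p) < σ (Fin.castLE hi q) ↔ σ' p < σ' q)
    (Hτ : ∀ p q : Fin i, τ (Fin.castLE hi p) < τ (Fin.castLE hi q) ↔ τ' p < τ' q)
    {p : ℕ} (hp : p + 2 ≤ i) : CAat σ τ p ↔ CAat σ' τ' p := by
  constructor
  · rintro ⟨a, b, ha, hb, h1, h2⟩
    refine ⟨⟨p, by omega⟩, ⟨p + 1, by omega⟩, rfl, rfl, ?_, ?_⟩
    · rw [← Hσ]
      have ea : Fin.castLE hi (⟨p, by omega⟩ : Fin i) = a := Fin.ext (by simp [ha])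
      have eb : Fin.castLE hi (⟨p + 1, by omega⟩ : Fin i) = b := Fin.ext (by simp [hb])
      rwa [ea, eb]
    · rw [← Hτ]
      have ea : Fin.castLE hi (⟨p, by omega⟩ : Fin i) = a := Fin.ext (by simp [ha])
      have eb : Fin.castLE hi (⟨p + 1, by omega⟩ : Fin i) = b := Fin.ext (by simp [hb])
      rwa [ea, eb]
  · rintro ⟨a, b, ha, hb, h1, h2⟩
    refine ⟨Fin.castLE hi a, Fin.castLE hi b, by simpa using ha, by simpa using hb, ?_, ?_⟩
    · exact (Hσ a b).mpr h1
    · exact (Hτ a b).mpr h2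

lemma valid_sufInc {σ τ : Perm (Fin n)} (hv : Valid n i σ τ) : SufInc i σ ∧ SufInc i τ := by
  constructor <;>
  · intro p q hip hpq
    obtain ⟨a, b, ha, hb, h1, h2⟩ := hv.1 (p : ℕ) hip (by have := q.isLt; omega)
    have ea : a = p := Fin.ext ha
    have eb : b = q := Fin.ext (by omega)
    subst ea; subst eb
    first | exact h1 | exact h2

lemma rk_of_valid {σ τ : Perm (Fin n)} (hi : i ≤ n) (hv : Valid n i σ τ) :
    ¬ CommonAscent (rk hi σ) (rk hi τ) := by
  rw [commonAscent_iff_CAat]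
  rintro ⟨p, hca⟩
  have hpi : p + 2 ≤ i := by
    obtain ⟨a, b, ha, hb, -, -⟩ := id hca
    have := b.isLt; omega
  have := (CAat_transfer hi (fun p q => (rk_lt_rk hi σ p q).symm)
    (fun p q => (rk_lt_rk hi τ p q).symm) hpi).mpr hca
  exact hv.2 p hpi this

lemma glue_valid (hi : i ≤ n) {T U : Finset (Fin n)} (hT : T.card = i) (hU : U.card = i)
    {σ' τ' : Perm (Fin i)} (hca : ¬ CommonAscent σ' τ') :
    Valid n i (glue hi T σ') (glue hi U τ') := by
  constructor
  · intro p hip hp1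
    refine ⟨⟨p, by omega⟩, ⟨p + 1, hp1⟩, rfl, rfl, ?_, ?_⟩
    · exact glue_sufInc hi hT σ' _ _ (by simpa using hip) (by simp)
    · exact glue_sufInc hi hU τ' _ _ (by simpa using hip) (by simp)
  · intro p hp hca'
    have := (CAat_transfer hi (glue_lt_prefix hi hT σ') (glue_lt_prefix hi hU τ') hp).mp hca'
    exact hca ((commonAscent_iff_CAat σ' τ').mpr ⟨p, this⟩)

lemma E_eq (hi : i ≤ n) : E n i = GF n i ^ 2 * W i := by
  classical
  have hRHS : GF n i ^ 2 * W i =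
      ∑ x ∈ ((Finset.powersetCard i (Finset.univ : Finset (Fin n))) ×ˢ
          (Finset.powersetCard i (Finset.univ : Finset (Fin n)))) ×ˢ
          (Finset.univ.filter
            (fun p : Perm (Fin i) × Perm (Fin i) => ¬ CommonAscent p.1 p.2)),
        Polynomial.X ^ (wF x.1.1 + wF x.1.2 + (inversions x.2.1 + inversions x.2.2)) := by
    refine Eq.symm ?_
    calc ∑ x ∈ ((Finset.powersetCard i (Finset.univ : Finset (Fin n))) ×ˢ
          (Finset.powersetCard i (Finset.univ : Finset (Fin n)))) ×ˢ
          (Finset.univ.filter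
            (fun p : Perm (Fin i) × Perm (Fin i) => ¬ CommonAscent p.1 p.2)),
        Polynomial.X ^ (wF x.1.1 + wF x.1.2 + (inversions x.2.1 + inversions x.2.2))
        = ∑ y ∈ (Finset.powersetCard i (Finset.univ : Finset (Fin n))) ×ˢ
            (Finset.powersetCard i (Finset.univ : Finset (Fin n))),
            ∑ z ∈ Finset.univ.filter
              (fun p : Perm (Fin i) × Perm (Fin i) => ¬ CommonAscent p.1 p.2),
            Polynomial.X ^ (wF y.1 + wF y.2 + (inversions z.1 + inversions z.2)) :=
          Finset.sum_product _ _ _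
      _ = ∑ y ∈ (Finset.powersetCard i (Finset.univ : Finset (Fin n))) ×ˢ
            (Finset.powersetCard i (Finset.univ : Finset (Fin n))),
            (Polynomial.X ^ wF y.1 * Polynomial.X ^ wF y.2) * W i := by
          refine Finset.sum_congr rfl fun y hy => ?_
          rw [W, Finset.mul_sum]
          refine Finset.sum_congr rfl fun z hz => ?_
          rw [pow_add, pow_add]
      _ = (∑ y ∈ (Finset.powersetCard i (Finset.univ : Finset (Fin n))) ×ˢ
            (Finset.powersetCard i (Finset.univ : Finset (Fin n))),
            Polynomial.X ^ wF y.1 * Polynomial.X ^ wF y.2) * W i := by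
          rw [Finset.sum_mul]
      _ = (GF n i * GF n i) * W i := by
          rw [GF, Finset.sum_mul_sum]
          exact congrArg (· * W i) (Finset.sum_product _ _ _)
      _ = GF n i ^ 2 * W i := by rw [sq]
  rw [hRHS, E]
  refine Finset.sum_nbij' (fun b => ((pset i b.1, pset i b.2), (rk hi b.1, rk hi b.2)))
    (fun a => (glue hi a.1.1 a.2.1, glue hi a.1.2 a.2.2)) ?_ ?_ ?_ ?_ ?_
  · intro b hb
    rw [Finset.mem_filter] at hb
    simp only [Finset.mem_product, Finset.mem_powersetCard, Finset.mem_filter, Finset.mem_univ,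
      true_and]
    exact ⟨⟨⟨Finset.subset_univ _, card_pset hi _⟩, ⟨Finset.subset_univ _, card_pset hi _⟩⟩,
      rk_of_valid hi hb.2⟩
  · intro a ha
    simp only [Finset.mem_product, Finset.mem_powersetCard, Finset.mem_filter, Finset.mem_univ,
      true_and] at ha
    rw [Finset.mem_filter]
    exact ⟨Finset.mem_univ _, glue_valid hi ha.1.1.2 ha.1.2.2 ha.2⟩
  · intro b hb
    rw [Finset.mem_filter] at hb
    obtain ⟨hs1, hs2⟩ := valid_sufInc hb.2
    exact Prod.ext (glue_unglue hi hs1) (glue_unglue hi hs2)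
  · intro a ha
    simp only [Finset.mem_product, Finset.mem_powersetCard, Finset.mem_filter, Finset.mem_univ,
      true_and] at ha
    have e1 := pset_glue hi ha.1.1.2 a.2.1
    have e2 := pset_glue hi ha.1.2.2 a.2.2
    have e3 := rk_glue hi ha.1.1.2 a.2.1
    have e4 := rk_glue hi ha.1.2.2 a.2.2
    simp only [Prod.ext_iff]
    exact ⟨⟨e1, e2⟩, e3, e4⟩
  · intro b hb
    rw [Finset.mem_filter] at hb
    obtain ⟨hs1, hs2⟩ := valid_sufInc hb.2
    show Polynomial.X ^ (inversions b.1 + inversions b.2)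
        = Polynomial.X ^ (wF (pset i b.1) + wF (pset i b.2)
            + (inversions (rk hi b.1) + inversions (rk hi b.2)))
    rw [inversions_eq hi b.1 hs1, inversions_eq hi b.2 hs2]
    congr 1
    omega



lemma wF_eq_wN (T : Finset (Fin n)) : wF T = wN n (T.image Fin.val) := by
  rw [wF, wN, crossN]
  refine Finset.card_bij (fun ab _ => ((ab.1 : ℕ), (ab.2 : ℕ))) ?_ ?_ ?_
  · intro ab hab
    simp only [Finset.mem_filter, Finset.mem_product, Finset.mem_compl] at hab ⊢
    obtain ⟨⟨h1, h2⟩, h3⟩ := hab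
    refine ⟨⟨Finset.mem_image_of_mem _ h1, Finset.mem_sdiff.mpr ⟨Finset.mem_range.mpr ab.2.isLt,
      fun hc => ?_⟩⟩, h3⟩
    obtain ⟨b, hb, hbe⟩ := Finset.mem_image.mp hc
    exact h2 (Fin.val_injective hbe ▸ hb)
  · intro a ha b hb h
    simp only [Prod.mk.injEq] at h
    exact Prod.ext (Fin.val_injective h.1) (Fin.val_injective h.2)
  · intro b hb
    simp only [Finset.mem_filter, Finset.mem_product, Finset.mem_sdiff, Finset.mem_range,
      Finset.mem_image] at hb
    obtain ⟨⟨⟨a, ha, hae⟩, ⟨hblt, hbni⟩⟩, hord⟩ := hb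
    refine ⟨(a, ⟨b.2, hblt⟩), ?_, by simp [hae]⟩
    simp only [Finset.mem_filter, Finset.mem_product, Finset.mem_compl]
    refine ⟨⟨ha, fun hc => hbni ⟨⟨b.2, hblt⟩, hc, rfl⟩⟩, ?_⟩
    show (⟨b.2, hblt⟩ : Fin n) < a
    rw [Fin.lt_def, hae]
    exact hord

lemma GF_eq_GN (n i : ℕ) : GF n i = GN n i := by
  rw [GF, GN]
  refine Finset.sum_nbij' (fun T => T.image Fin.val)
    (fun S => Finset.univ.filter (fun a : Fin n => (a : ℕ) ∈ S)) ?_ ?_ ?_ ?_ ?_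
  · intro T hT
    rw [Finset.mem_powersetCard] at hT ⊢
    refine ⟨fun x hx => ?_, by rw [Finset.card_image_of_injective _ Fin.val_injective, hT.2]⟩
    obtain ⟨a, _, rfl⟩ := Finset.mem_image.mp hx
    exact Finset.mem_range.mpr a.isLt
  · intro S hS
    rw [Finset.mem_powersetCard] at hS ⊢
    refine ⟨Finset.subset_univ _, ?_⟩
    have himg : (Finset.univ.filter (fun a : Fin n => (a : ℕ) ∈ S)).image Fin.val = S := by
      ext x
      simp only [Finset.mem_image, Finset.mem_filter, Finset.mem_univ, true_and]
      constructor
      · rintro ⟨a, ha, rfl⟩; exact ha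
      · intro hx
        exact ⟨⟨x, Finset.mem_range.mp (hS.1 hx)⟩, hx, rfl⟩
    have hc := congrArg Finset.card himg
    rw [Finset.card_image_of_injective _ Fin.val_injective] at hc
    exact hc.trans hS.2
  · intro T hT
    ext a
    simp only [Finset.mem_filter, Finset.mem_univ, true_and, Finset.mem_image]
    constructor
    · rintro ⟨b, hb, hbe⟩
      exact Fin.val_injective hbe ▸ hb
    · intro ha; exact ⟨a, ha, rfl⟩
  · intro S hS
    rw [Finset.mem_powersetCard] at hS
    ext x
    simp only [Finset.mem_image, Finset.mem_filter, Finset.mem_univ, true_and]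
    constructor
    · rintro ⟨a, ha, rfl⟩; exact ha
    · intro hx
      exact ⟨⟨x, Finset.mem_range.mp (hS.1 hx)⟩, hx, rfl⟩
  · intro T hT
    rw [wF_eq_wN]

lemma W_zero : W 0 = 1 := by
  rw [W]
  have h1 : (Finset.univ.filter
      (fun p : Perm (Fin 0) × Perm (Fin 0) => ¬ CommonAscent p.1 p.2)) = {(1, 1)} := by
    ext p
    simp only [Finset.mem_filter, Finset.mem_univ, true_and, Finset.mem_singleton]
    constructor
    · intro _
      have : Subsingleton (Perm (Fin 0)) := inferInstance
      exact Prod.ext (Subsingleton.elim _ _) (Subsingleton.elim _ _)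
    · rintro rfl
      rintro ⟨a, _, _, _⟩
      exact a.elim0
  rw [h1, Finset.sum_singleton]
  have h2 : inversions (1 : Perm (Fin 0)) = 0 := by
    simp [inversions]
  rw [h2, add_zero, pow_zero]


lemma E_eq_W {n i : ℕ} (hi : i ≤ n) : E n i = GN n i ^ 2 * W i := by
  rw [E_eq hi, GF_eq_GN]

-- NEW: key polynomial identity
lemma key {n : ℕ} (hn : 1 ≤ n) :
    W n = ∑ i ∈ Finset.range n, (-1 : Polynomial ℚ)^(n-1+i) * (GN n i ^ 2 * W i) := by
  obtain ⟨m, rfl⟩ : ∃ m, n = m + 1 := ⟨n-1, by omega⟩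
  have hsum := cancellation (n := m+1) hn
  rw [Finset.sum_range_succ] at hsum
  have hE : ∀ i ∈ Finset.range (m+1), (-1:Polynomial ℚ)^i * E (m+1) i
      = (-1 : Polynomial ℚ)^i * (GN (m+1) i ^ 2 * W i) := fun i hi => by
    rw [E_eq_W (by have := Finset.mem_range.mp hi; omega)]
  rw [Finset.sum_congr rfl hE] at hsum
  have hlast : E (m+1) (m+1) = W (m+1) := by rw [E_eq_W le_rfl, GN_self]; ring
  rw [hlast] at hsum
  have hshift : ∑ i ∈ Finset.range (m+1), (-1:Polynomial ℚ)^(m+1-1+i) * (GN (m+1) i ^2 * W i)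
      = (-1 : Polynomial ℚ)^m * ∑ i ∈ Finset.range (m+1),
          (-1:Polynomial ℚ)^i * (GN (m+1) i ^2 * W i) := by
    rw [Finset.mul_sum]
    refine Finset.sum_congr rfl fun i _ => ?_
    rw [show m+1-1+i = m+i by omega, pow_add]
    ring
  rw [hshift]
  have h1 : (-1 : Polynomial ℚ)^m * (-1 : Polynomial ℚ)^m = 1 := by
    rw [← pow_add]
    exact Even.neg_one_pow ⟨m, rfl⟩
  linear_combination (-(-1 : Polynomial ℚ)^m) * hsum + (-(W (m+1))) * h1

end Spec17



open Spec17 in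
/-- if `c_0 = 1` and
`c_n = ∑_{i=0}^{n-1} (-1)^{n-1+i} c_i ∏_{j=1}^{n-i} 1/(1-q^j)^2` for `n ≥ 1`, then
`c_n = W_n(q) / ∏_{k=1}^n (1-q^k)^2` in the field `ℚ(q)`. -/
theorem specialization_recursion (c : ℕ → RatFunc ℚ) (h0 : c 0 = 1)
    (hrec : ∀ n : ℕ, 1 ≤ n → c n =
      ∑ i ∈ Finset.range n, (-1 : RatFunc ℚ) ^ (n - 1 + i) * c i *
        ∏ j ∈ Finset.range (n - i), ((1 - RatFunc.X ^ (j + 1)) ^ 2)⁻¹) :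
    ∀ n : ℕ, c n =
      algebraMap (Polynomial ℚ) (RatFunc ℚ) (W n) /
        ∏ k ∈ Finset.range n, (1 - RatFunc.X ^ (k + 1)) ^ 2 := by
  intro n
  induction n using Nat.strong_induction_on with
  | _ n ih =>
  rcases Nat.eq_zero_or_pos n with rfl | hn
  · simpa [W_zero] using h0
  have hφX : algebraMap (Polynomial ℚ) (RatFunc ℚ) Polynomial.X = RatFunc.X :=
    RatFunc.algebraMap_X
  set φ := algebraMap (Polynomial ℚ) (RatFunc ℚ) with hφ
  set P : ℕ → RatFunc ℚ := fun m => ∏ k ∈ Finset.range m, ((1 : RatFunc ℚ) - RatFunc.X ^ (k+1)) with hP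
  have hdne : ∀ j : ℕ, ((1 : RatFunc ℚ) - RatFunc.X ^ (j+1)) ≠ 0 := by
    intro j h
    have h2 : φ (1 - Polynomial.X ^ (j+1)) = 0 := by
      rw [map_sub, map_one, map_pow, hφX]; exact h
    have h3 : (1 - Polynomial.X ^ (j+1) : Polynomial ℚ) = 0 :=
      RatFunc.algebraMap_injective ℚ (by rw [map_zero]; exact h2)
    have h4 := congrArg (fun q : Polynomial ℚ => q.coeff 0) h3
    simp [Polynomial.coeff_X_pow] at h4
  have hPne : ∀ m : ℕ, P m ≠ 0 :=
    fun m => Finset.prod_ne_zero_iff.mpr fun k _ => hdne k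
  have hPP : ∀ m : ℕ, (∏ k ∈ Finset.range m, ((1 : RatFunc ℚ) - RatFunc.X ^ (k+1))^2) = (P m)^2 :=
    fun m => Finset.prod_pow _ _ _
  -- Step A: image of the Gaussian binomial identity
  have hA : ∀ i : ℕ, i ≤ n → φ (GN n i) * P (n - i) =
      ∏ j ∈ Finset.range (n-i), ((1 : RatFunc ℚ) - RatFunc.X ^ (i+1+j)) := by
    intro i hi
    have h1 := congrArg φ (GN_prod n i hi)
    simp only [map_mul, map_prod, map_sub, map_one, map_pow, hφX] at h1
    exact h1
  -- Step B: factorization of denominators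
  have hB : ∀ i : ℕ, i ≤ n → P n = P i * (φ (GN n i) * P (n - i)) := by
    intro i hi
    rw [hA i hi, hP]
    have hni : n = i + (n - i) := by omega
    calc ∏ k ∈ Finset.range n, ((1 : RatFunc ℚ) - RatFunc.X ^ (k+1))
        = ∏ k ∈ Finset.range (i + (n-i)), ((1 : RatFunc ℚ) - RatFunc.X ^ (k+1)) := by rw [← hni]
      _ = (∏ k ∈ Finset.range i, ((1 : RatFunc ℚ) - RatFunc.X ^ (k+1))) *
            ∏ k ∈ Finset.range (n-i), ((1 : RatFunc ℚ) - RatFunc.X ^ (i+k+1)) :=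
          Finset.prod_range_add _ i (n-i)
      _ = (∏ k ∈ Finset.range i, ((1 : RatFunc ℚ) - RatFunc.X ^ (k+1))) *
            ∏ k ∈ Finset.range (n-i), ((1 : RatFunc ℚ) - RatFunc.X ^ (i+1+k)) := by
          refine congrArg _ (Finset.prod_congr rfl fun k _ => ?_)
          rw [show i+k+1 = i+1+k by omega]
  have hGNne : ∀ i : ℕ, i ≤ n → φ (GN n i) ≠ 0 := by
    intro i hi hzero
    exact hPne n (by rw [hB i hi, hzero]; ring)
  -- rewrite using the recursion and the inductive hypothesis
  rw [hrec n hn, hPP]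
  have hterm : ∀ i ∈ Finset.range n,
      (-1 : RatFunc ℚ) ^ (n - 1 + i) * c i *
        ∏ j ∈ Finset.range (n - i), (((1 : RatFunc ℚ) - RatFunc.X ^ (j + 1)) ^ 2)⁻¹
      = φ ((-1 : Polynomial ℚ)^(n-1+i) * (GN n i ^ 2 * W i)) / (P n)^2 := by
    intro i hi
    have hilt := Finset.mem_range.mp hi
    rw [ih i hilt, hPP]
    rw [Finset.prod_inv_distrib, hPP]
    rw [map_mul, map_mul, map_pow, map_pow, map_neg, map_one]
    rw [hB i (le_of_lt hilt)]
    have h1 : P i ≠ 0 := hPne i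
    have h2 : P (n-i) ≠ 0 := hPne (n-i)
    have h3 : φ (GN n i) ≠ 0 := hGNne i (le_of_lt hilt)
    field_simp
  rw [Finset.sum_congr rfl hterm, ← Finset.sum_div]
  congr 1
  rw [← map_sum]
  exact congrArg φ (key hn).symm
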